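/- Suppose m ∈ F^k, c = m·G_a, c̄ = c·W, and f ∈ F^n satisfies f_j = 0 for all k ≤ j ≤ n−1 and f·𝐅 = c̄. Then the reduced k-dimensional system (f_0, f_1, …, f_{k−1})^T = D_{k×k} · 𝐅⁻_{k×k} · W_{k×k} · A^T · m^T holds, where M_{k×k} denotes the upper-left k×k submatrix of an n×n matrix M. -/
import Mathlib

lemma aux_per {F : Type*} [Field F] {n : ℕ} {α : F} (hα0 : α ≠ 0) (hαn : α ^ n = 1) :
    ∀ x y : ℤ, (n:ℤ) ∣ x - y → α ^ x = α ^ y := by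
  rintro x y ⟨c, hc⟩
  have hx : x = y + (n:ℤ) * c := by linarith
  rw [hx, zpow_add₀ hα0, zpow_mul, zpow_natCast, hαn, one_zpow, mul_one]

lemma aux_geom {F : Type*} [Field F] {n : ℕ} {β : F} (hβn : β ^ n = 1) (hβ1 : β ≠ 1) :
    ∑ t ∈ Finset.range n, β ^ t = 0 := by
  rw [geom_sum_eq hβ1, hβn, sub_self, zero_div]

/-- Reduced `k`-dimensional system: `(f_0,…,f_{k-1})ᵀ = D_{k×k}·𝐅⁻_{k×k}·W_{k×k}·Aᵀ·mᵀ`. -/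
theorem stmt_10 (F : Type*) [Field F] (n k : ℕ) (b : ℤ)
    (hn : 1 ≤ n) (hk : 1 ≤ k) (hkn : k < n)
    (α : F) (hα : IsPrimitiveRoot α n)
    (hchar : (n : F) = 1)
    (A : Matrix (Fin k) (Fin k) F) (hA : IsUnit A)
    (m : Fin k → F) (f : Fin n → F) :
    let g : Polynomial F :=
      ∏ t ∈ Finset.range (n - k), (Polynomial.X - Polynomial.C (α ^ (b + (t : ℤ))))
    let gb : Fin n → F := fun i => g.coeff i * α ^ ((b - 1) * ((i : ℕ) : ℤ))
    let G : Matrix (Fin k) (Fin n) F :=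
      Matrix.of fun i t => g.coeff ((t - Fin.castLE hkn.le i : Fin n) : ℕ)
    let Ga : Matrix (Fin k) (Fin n) F := A * G
    let W : Matrix (Fin n) (Fin n) F :=
      Matrix.diagonal fun i : Fin n => α ^ ((b - 1) * ((i : ℕ) : ℤ))
    let Fmat : Matrix (Fin n) (Fin n) F :=
      Matrix.of fun i j : Fin n => α ^ ((i : ℕ) * (j : ℕ))
    let Finv : Matrix (Fin n) (Fin n) F :=
      Matrix.of fun i j : Fin n => α ^ (-(((i : ℕ) : ℤ) * ((j : ℕ) : ℤ)))
    let D : Matrix (Fin n) (Fin n) F :=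
      Matrix.diagonal fun j : Fin n => ∑ i : Fin n, gb i * α ^ (-(((i : ℕ) : ℤ) * ((j : ℕ) : ℤ)))
    let kk : ∀ _ : Matrix (Fin n) (Fin n) F, Matrix (Fin k) (Fin k) F :=
      fun M => M.submatrix (Fin.castLE hkn.le) (Fin.castLE hkn.le)
    (∀ j : Fin n, k ≤ (j : ℕ) → f j = 0) →
    Matrix.vecMul f Fmat = Matrix.vecMul (Matrix.vecMul m Ga) W →
    (fun j : Fin k => f (Fin.castLE hkn.le j)) =
      Matrix.mulVec (kk D * kk Finv * kk W * A.transpose) m := by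
  intro g gb G Ga W Fmat Finv D kk hf0 hfc
  have hα0 : α ≠ 0 := hα.ne_zero (by omega)
  have hαn : α ^ n = 1 := hα.pow_eq_one
  have hper := aux_per hα0 hαn
  -- Fmat * Finv = 1
  have hFF : Fmat * Finv = 1 := by
    ext i j
    have hterm : ∀ t : Fin n, α ^ ((i:ℕ) * (t:ℕ)) * α ^ (-(((t:ℕ):ℤ) * ((j:ℕ):ℤ)))
        = (α ^ (((i:ℕ):ℤ) - ((j:ℕ):ℤ))) ^ (t:ℕ) := by
      intro t
      rw [← zpow_natCast α ((i:ℕ) * (t:ℕ)), ← zpow_add₀ hα0, ← zpow_natCast _ (t:ℕ),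
        ← zpow_mul]
      congr 1
      push_cast
      ring
    simp only [Fmat, Finv, Matrix.mul_apply, Matrix.of_apply, Matrix.one_apply]
    rw [Finset.sum_congr rfl (fun t _ => hterm t), Fin.sum_univ_eq_sum_range
      (fun t => (α ^ (((i:ℕ):ℤ) - ((j:ℕ):ℤ))) ^ t) n]
    by_cases hij : i = j
    · subst hij
      simp [hchar]
    · rw [if_neg hij]
      apply aux_geom
      · rw [← zpow_natCast, ← zpow_mul]
        rw [hper ((((i:ℕ):ℤ) - ((j:ℕ):ℤ)) * n) 0 ⟨((i:ℕ):ℤ) - ((j:ℕ):ℤ), by ring⟩]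
        exact zpow_zero α
      · intro h1
        have hd := (hα.zpow_eq_one_iff_dvd _).mp h1
        have hi : ((i:ℕ):ℤ) < n := by exact_mod_cast i.isLt
        have hj : ((j:ℕ):ℤ) < n := by exact_mod_cast j.isLt
        have h0 : ((i:ℕ):ℤ) - ((j:ℕ):ℤ) = 0 :=
          Int.eq_zero_of_abs_lt_dvd hd (abs_lt.mpr ⟨by omega, by omega⟩)
        exact hij (Fin.ext (by omega))
  have hf : f = Matrix.vecMul (Matrix.vecMul (Matrix.vecMul m Ga) W) Finv := by
    rw [← hfc, Matrix.vecMul_vecMul, hFF, Matrix.vecMul_one]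
  haveI : NeZero n := ⟨by omega⟩
  funext p
  set e : ℤ := b - 1 - ((p:ℕ):ℤ) with he
  set c : Fin k → F := Matrix.vecMul m A with hcdef
  have hInner : ∀ q : Fin k,
      (∑ t : Fin n, g.coeff ((t - Fin.castLE hkn.le q : Fin n) : ℕ) * α ^ (e * ((t:ℕ):ℤ)))
      = α ^ (e * ((q:ℕ):ℤ)) * ∑ s : Fin n, g.coeff (s:ℕ) * α ^ (e * ((s:ℕ):ℤ)) := by
    intro q
    rw [Finset.mul_sum, ← Equiv.sum_comp (Equiv.addRight (Fin.castLE hkn.le q))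
      (fun t => g.coeff ((t - Fin.castLE hkn.le q : Fin n) : ℕ) * α ^ (e * ((t:ℕ):ℤ)))]
    refine Finset.sum_congr rfl fun s _ => ?_
    simp only [Equiv.coe_addRight, add_sub_cancel_right]
    have hv : (((s + Fin.castLE hkn.le q : Fin n) : ℕ) : ℤ) = (((s:ℕ):ℤ) + ((q:ℕ):ℤ)) % (n:ℤ) := by
      rw [Fin.val_add, Fin.coe_castLE, Int.natCast_mod]
      push_cast
      ring
    have hsplit : α ^ (e * (((s + Fin.castLE hkn.le q : Fin n) : ℕ) : ℤ))
        = α ^ (e * ((s:ℕ):ℤ) + e * ((q:ℕ):ℤ)) := by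
      apply hper
      rw [hv]
      set a : ℤ := ((s:ℕ):ℤ) + ((q:ℕ):ℤ) with ha
      have h1 : (n:ℤ) ∣ a % n - a := ⟨-(a / n), by linarith [Int.mul_ediv_add_emod a n]⟩
      have h2 : e * (a % n) - (e * ((s:ℕ):ℤ) + e * ((q:ℕ):ℤ)) = e * (a % n - a) := by
        rw [ha]; ring
      rw [h2]
      exact h1.mul_left e
    rw [hsplit, zpow_add₀ hα0]
    ring
  have hL : f (Fin.castLE hkn.le p) =
      ∑ q : Fin k, c q * ∑ t : Fin n,
        g.coeff ((t - Fin.castLE hkn.le q : Fin n) : ℕ) * α ^ (e * ((t:ℕ):ℤ)) := by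
    rw [hf]
    simp only [Matrix.vecMul, dotProduct, Ga, G, W, Finv, Matrix.mul_apply,
      Matrix.of_apply, Matrix.diagonal_apply, Fin.coe_castLE, mul_ite, mul_zero, ite_mul,
      zero_mul, Finset.sum_ite_eq, Finset.sum_ite_eq', Finset.mem_univ, if_true]
    have hαm : ∀ t : Fin n, α ^ ((b-1) * ((t:ℕ):ℤ)) * α ^ (-(((t:ℕ):ℤ) * ((p:ℕ):ℤ)))
        = α ^ (e * ((t:ℕ):ℤ)) := by
      intro t
      rw [← zpow_add₀ hα0]
      congr 1
      rw [he]; ring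
    simp only [hcdef, Matrix.vecMul, dotProduct, Finset.sum_mul, Finset.mul_sum]
    refine Eq.trans (Finset.sum_congr rfl fun x _ => Finset.sum_comm) ?_
    rw [Finset.sum_comm]
    refine Finset.sum_congr rfl fun q _ => Finset.sum_congr rfl fun t _ =>
      Finset.sum_congr rfl fun y _ => ?_
    rw [← hαm t]
    ring
  have hR : Matrix.mulVec (kk D * kk Finv * kk W * A.transpose) m p
      = ∑ q : Fin k, c q * (α ^ (e * ((q:ℕ):ℤ)) *
          ∑ s : Fin n, g.coeff (s:ℕ) * α ^ (e * ((s:ℕ):ℤ))) := by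
    simp only [kk, D, W, Finv, gb, Matrix.mulVec, dotProduct, Matrix.mul_apply,
      Matrix.submatrix_apply, Matrix.diagonal_apply, Matrix.of_apply, Matrix.transpose_apply,
      Fin.coe_castLE, Fin.castLE_inj, mul_ite, mul_zero, ite_mul, zero_mul,
      Finset.sum_ite_eq, Finset.sum_ite_eq', Finset.mem_univ, if_true]
    have hαm2 : ∀ q : Fin k, α ^ (-(((p:ℕ):ℤ) * ((q:ℕ):ℤ))) * α ^ ((b-1) * ((q:ℕ):ℤ))
        = α ^ (e * ((q:ℕ):ℤ)) := by
      intro q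
      rw [← zpow_add₀ hα0]
      congr 1
      rw [he]; ring
    have hS : (∑ x : Fin n, g.coeff (x:ℕ) * α ^ ((b-1) * ((x:ℕ):ℤ)) * α ^ (-(((x:ℕ):ℤ) * ((p:ℕ):ℤ))))
        = ∑ s : Fin n, g.coeff (s:ℕ) * α ^ (e * ((s:ℕ):ℤ)) := by
      refine Finset.sum_congr rfl fun s _ => ?_
      rw [mul_assoc, ← zpow_add₀ hα0]
      congr 1
      rw [he]; ring
    rw [hS]
    generalize (∑ s : Fin n, g.coeff (s:ℕ) * α ^ (e * ((s:ℕ):ℤ))) = S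
    simp only [hcdef, Matrix.vecMul, dotProduct, Finset.sum_mul]
    rw [Finset.sum_comm]
    refine Finset.sum_congr rfl fun q _ => Finset.sum_congr rfl fun x _ => ?_
    rw [← hαm2 q]
    ring
  rw [hL, hR]
  exact Finset.sum_congr rfl fun q _ => by rw [hInner q]
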